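/- Let λ_k ∈ S, g ∈ E, β > 0, and let λ₊ ∈ S be a point minimizing λ ↦ ⟨λ, g⟩ + h(λ) + (1/β)·D(λ, λ_k) over S. Assume h is convex on S and differentiable at λ₊, the map λ ↦ D(λ, λ_k) is differentiable at λ₊, and α > 0 satisfies ⟨λ₊ − λ_k, ∇₁D(λ₊, λ_k)⟩ ≥ α·‖λ₊ − λ_k‖². Then, with G := (λ_k − λ₊)/β, one has ⟨g, G⟩ ≥ α·‖G‖² + (1/β)·(h(λ₊) − h(λ_k)). -/

import Mathlib

open scoped RealInnerProductSpace
open Set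

/-- Subgradient inequality for a convex function differentiable at a point. -/
lemma convexOn_fderiv_le {E : Type*} [NormedAddCommGroup E] [NormedSpace ℝ E]
    {S : Set E} {h : E → ℝ} (hconv : ConvexOn ℝ S h) {x : E} (hx : x ∈ S)
    {f' : E →L[ℝ] ℝ} (hf : HasFDerivAt h f' x) {y : E} (hy : y ∈ S) :
    f' (y - x) ≤ h y - h x := by
  set v := y - x with hv
  have hline : HasDerivAt (fun t : ℝ => x + t • v) v 0 := by
    simpa using ((hasDerivAt_id (0:ℝ)).smul_const v).const_add x
  have hφ : HasDerivAt (fun t : ℝ => h (x + t • v)) (f' v) 0 := by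
    have hf' : HasFDerivAt h f' ((fun t : ℝ => x + t • v) 0) := by simpa using hf
    exact hf'.comp_hasDerivAt 0 hline
  have hslope : Filter.Tendsto (slope (fun t : ℝ => h (x + t • v)) 0)
      (nhdsWithin 0 (Ioi 0)) (nhds (f' v)) :=
    (hasDerivAt_iff_tendsto_slope.mp hφ).mono_left
      (nhdsWithin_mono _ (fun t ht => ne_of_gt ht))
  refine le_of_tendsto hslope ?_
  filter_upwards [Ioc_mem_nhdsGT_of_mem (Set.left_mem_Ico.mpr one_pos)] with t ht
  obtain ⟨ht0, ht1⟩ := ht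
  have hmem : x + t • v = (1 - t) • x + t • y := by
    rw [hv]; module
  have hle : h (x + t • v) ≤ (1 - t) * h x + t * h y := by
    rw [hmem]
    exact hconv.2 hx hy (by linarith) (le_of_lt ht0) (by ring)
  have : slope (fun t : ℝ => h (x + t • v)) 0 t
      = (h (x + t • v) - h (x + (0:ℝ) • v)) / t := by
    simp [slope_def_field, div_eq_div_iff (ne_of_gt ht0) (ne_of_gt ht0)]
  rw [this]
  simp only [zero_smul, add_zero]
  rw [div_le_iff₀ ht0]
  nlinarith

theorem stmt_0 {E : Type*} [NormedAddCommGroup E] [InnerProductSpace ℝ E] [CompleteSpace E]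
    (S : Set E) (hS : Convex ℝ S)
    (h : E → ℝ) (D : E → E → ℝ)
    (lamk : E) (hlamkS : lamk ∈ S) (g : E) (β : ℝ) (hβ : 0 < β)
    (lamp : E) (hlampS : lamp ∈ S)
    (hmin : ∀ y ∈ S,
      ⟪lamp, g⟫ + h lamp + (1 / β) * D lamp lamk ≤
        ⟪y, g⟫ + h y + (1 / β) * D y lamk)
    (hconv : ConvexOn ℝ S h) (hdiff : DifferentiableAt ℝ h lamp)
    (hDdiff : DifferentiableAt ℝ (fun x => D x lamk) lamp)
    (α : ℝ) (hα : 0 < α)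
    (hA6 : ⟪lamp - lamk, gradient (fun x => D x lamk) lamp⟫ ≥ α * ‖lamp - lamk‖ ^ 2) :
    ⟪g, (1 / β) • (lamk - lamp)⟫ ≥
      α * ‖(1 / β) • (lamk - lamp)‖ ^ 2 + (1 / β) * (h lamp - h lamk) := by
  set F : E → ℝ := fun x => ⟪g, x⟫ + h x + (1 / β) * D x lamk with hF
  set fh : E →L[ℝ] ℝ := fderiv ℝ h lamp with hfh
  set fD : E →L[ℝ] ℝ := fderiv ℝ (fun x => D x lamk) lamp with hfD
  have hinner : HasFDerivAt (fun x : E => ⟪g, x⟫) (innerSL ℝ g) lamp :=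
    (innerSL ℝ g).hasFDerivAt
  have hF' : HasFDerivAt F ((innerSL ℝ g) + fh + (1 / β) • fD) lamp :=
    (hinner.add hdiff.hasFDerivAt).add (hDdiff.hasFDerivAt.const_smul (1 / β))
  -- first-order optimality along lamk - lamp
  have hcone : lamk - lamp ∈ posTangentConeAt S lamp :=
    sub_mem_posTangentConeAt_of_segment_subset (hS.segment_subset hlampS hlamkS)
  have hlocmin : IsLocalMinOn F S lamp := by
    apply Filter.eventually_iff_exists_mem.mpr
    refine ⟨S, self_mem_nhdsWithin, fun y hy => ?_⟩
    simp only [hF]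
    linarith [hmin y hy, real_inner_comm y g, real_inner_comm lamp g]
  have hopt : (0:ℝ) ≤ ((innerSL ℝ g) + fh + (1 / β) • fD) (lamk - lamp) :=
    hlocmin.hasFDerivWithinAt_nonneg hF'.hasFDerivWithinAt hcone
  have hopt' : (0:ℝ) ≤ ⟪g, lamk - lamp⟫ + fh (lamk - lamp) + (1 / β) * fD (lamk - lamp) := by
    simpa using hopt
  -- convexity
  have hcvx : fh (lamk - lamp) ≤ h lamk - h lamp :=
    convexOn_fderiv_le hconv hlampS hdiff.hasFDerivAt hlamkS
  -- A6 in terms of fD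
  have hGd := hDdiff.hasGradientAt
  rw [hasGradientAt_iff_hasFDerivAt] at hGd
  have hgrad : fD (lamp - lamk) = ⟪gradient (fun x => D x lamk) lamp, lamp - lamk⟫ := by
    rw [hfD, hGd.fderiv]; rfl
  have hA6' : α * ‖lamp - lamk‖ ^ 2 ≤ fD (lamp - lamk) := by
    rw [hgrad, real_inner_comm]; exact hA6
  have hfDsub : fD (lamk - lamp) = -fD (lamp - lamk) := by
    rw [← ContinuousLinearMap.map_neg]; congr 1; abel
  have hnorm : ‖(1 / β) • (lamk - lamp)‖ ^ 2 = (1 / β) ^ 2 * ‖lamp - lamk‖ ^ 2 := by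
    rw [norm_smul, ← norm_neg (lamk - lamp), neg_sub, mul_pow,
      Real.norm_eq_abs, abs_of_pos (by positivity : (0:ℝ) < 1 / β)]
  have hinner2 : ⟪g, (1 / β) • (lamk - lamp)⟫ = (1 / β) * ⟪g, lamk - lamp⟫ :=
    real_inner_smul_right g _ _
  rw [hinner2, hnorm]
  have hβ' : (0:ℝ) < 1 / β := by positivity
  nlinarith [mul_le_mul_of_nonneg_left hcvx (le_of_lt hβ'), mul_le_mul_of_nonneg_left hA6' (le_of_lt hβ'), mul_le_mul_of_nonneg_left hopt' (le_of_lt hβ')]
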